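/- If p is a prime congruent to 1 modulo 12, then p can be written in the form p = a² + 12 b² where a and b are relatively prime positive integers, and this representation is unique: there is exactly one pair (a, b) of positive integers with gcd(a,b) = 1 and p = a² + 12 b². -/

import Mathlib

/-- If `p ≡ 1 mod 12` is prime, then `-3` is a square mod `p`. -/
lemma aux_sqrt_neg3 (p : ℕ) [hpp : Fact p.Prime] (h1 : p % 12 = 1) :
    ∃ c : ZMod p, c ^ 2 = -3 := by
  haveI : Fact (Nat.Prime 3) := ⟨by norm_num⟩
  have hcard : Fintype.card (ZMod p)ˣ = p - 1 := ZMod.card_units p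
  have h3 : 3 ∣ Fintype.card (ZMod p)ˣ := by
    rw [hcard]; omega
  obtain ⟨ω, hω⟩ := exists_prime_orderOf_dvd_card 3 h3
  set w : ZMod p := (ω : ZMod p) with hw
  have hw3 : w ^ 3 = 1 := by
    have : ω ^ 3 = 1 := by rw [← hω]; exact pow_orderOf_eq_one ω
    have := congrArg (Units.val) this
    push_cast at this
    simpa [hw] using this
  have hwne : w ≠ 1 := by
    intro h
    have : ω = 1 := Units.ext (by simpa [hw] using h)
    rw [this] at hω
    simp at hω
  have hq : w ^ 2 + w + 1 = 0 := by
    have hfac : (w - 1) * (w ^ 2 + w + 1) = 0 := by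
      have : (w - 1) * (w ^ 2 + w + 1) = w ^ 3 - 1 := by ring
      rw [this, hw3, sub_self]
    rcases mul_eq_zero.mp hfac with h | h
    · exact absurd (sub_eq_zero.mp h) hwne
    · exact h
  exact ⟨2 * w + 1, by linear_combination 4 * hq⟩

/-- Thue-type lemma for the form `x² + 3y²`. -/
lemma aux_thue (p : ℕ) [hpp : Fact p.Prime] (c : ZMod p) (hc : c ^ 2 = -3) :
    ∃ x y : ℤ, (p : ℤ) ∣ x ^ 2 + 3 * y ^ 2 ∧ x ^ 2 + 3 * y ^ 2 ≠ 0 ∧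
      x ^ 2 < p ∧ y ^ 2 < p := by
  have hp := hpp.out
  set m : ℕ := Nat.sqrt p + 1 with hm
  have hsq_lt : Nat.sqrt p * Nat.sqrt p < p := by
    rcases lt_or_eq_of_le (Nat.sqrt_le p) with h | h
    · exact h
    · exfalso
      have hd : Nat.sqrt p ∣ p := ⟨Nat.sqrt p, h.symm⟩
      rcases (Nat.dvd_prime hp).mp hd with h1 | h1
      · rw [h1] at h; have := hp.two_le; omega
      · rw [h1] at h; have := hp.two_le; nlinarith
  have hcard : (Finset.univ : Finset (ZMod p)).card <
      ((Finset.range m) ×ˢ (Finset.range m)).card := by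
    rw [Finset.card_product, Finset.card_range, Finset.card_univ, ZMod.card]
    have := Nat.lt_succ_sqrt p
    simpa [hm, Nat.succ_eq_add_one] using this
  obtain ⟨⟨a₁, b₁⟩, hs₁, ⟨a₂, b₂⟩, hs₂, hne, hfe⟩ :=
    Finset.exists_ne_map_eq_of_card_lt_of_maps_to
      (t := (Finset.univ : Finset (ZMod p)))
      hcard
      (f := fun ab : ℕ × ℕ => (ab.1 : ZMod p) - c * ab.2)
      (fun a _ => Finset.mem_univ _)
  simp only [Finset.mem_product, Finset.mem_range] at hs₁ hs₂
  refine ⟨(a₁ : ℤ) - a₂, (b₁ : ℤ) - b₂, ?_, ?_, ?_, ?_⟩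
  · -- divisibility
    rw [← ZMod.intCast_zmod_eq_zero_iff_dvd]
    have hfe' : ((a₁ : ℤ) - a₂ : ℤ) = c * (((b₁ : ℤ) - b₂ : ℤ) : ZMod p) := by
      push_cast
      simp only at hfe
      linear_combination hfe
    push_cast
    push_cast at hfe'
    linear_combination (((a₁ : ZMod p) - a₂) + c * ((b₁ : ZMod p) - b₂)) * hfe' +
      ((b₁ : ZMod p) - b₂) ^ 2 * hc
  · -- nonzero
    intro h
    have hx : (a₁ : ℤ) - a₂ = 0 := by nlinarith [sq_nonneg ((a₁ : ℤ) - a₂), sq_nonneg ((b₁ : ℤ) - b₂)]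
    have hy : (b₁ : ℤ) - b₂ = 0 := by nlinarith [sq_nonneg ((a₁ : ℤ) - a₂), sq_nonneg ((b₁ : ℤ) - b₂)]
    apply hne
    have : a₁ = a₂ := by omega
    have : b₁ = b₂ := by omega
    ext <;> omega
  · -- x bound
    have h1 : ((a₁ : ℤ) - a₂) ≤ Nat.sqrt p := by
      have := hs₁.1; have := hs₂.1; push_cast; omega
    have h2 : -(Nat.sqrt p : ℤ) ≤ (a₁ : ℤ) - a₂ := by
      have := hs₁.1; have := hs₂.1; push_cast; omega
    have : ((a₁ : ℤ) - a₂) ^ 2 ≤ (Nat.sqrt p : ℤ) ^ 2 := sq_le_sq' h2 h1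
    have hlt : ((Nat.sqrt p : ℤ)) ^ 2 < p := by
      have := hsq_lt; push_cast; nlinarith
    linarith
  · -- y bound
    have h1 : ((b₁ : ℤ) - b₂) ≤ Nat.sqrt p := by
      have := hs₁.2; have := hs₂.2; push_cast; omega
    have h2 : -(Nat.sqrt p : ℤ) ≤ (b₁ : ℤ) - b₂ := by
      have := hs₁.2; have := hs₂.2; push_cast; omega
    have : ((b₁ : ℤ) - b₂) ^ 2 ≤ (Nat.sqrt p : ℤ) ^ 2 := sq_le_sq' h2 h1
    have hlt : ((Nat.sqrt p : ℤ)) ^ 2 < p := by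
      have := hsq_lt; push_cast; nlinarith
    linarith

/-- Existence of a representation `p = a² + 3b²`. -/
lemma aux_rep3 (p : ℕ) (hp : p.Prime) (h1 : p % 12 = 1) :
    ∃ a b : ℤ, (p : ℤ) = a ^ 2 + 3 * b ^ 2 := by
  haveI : Fact p.Prime := ⟨hp⟩
  obtain ⟨c, hc⟩ := aux_sqrt_neg3 p h1
  obtain ⟨x, y, hdvd, hne, hx, hy⟩ := aux_thue p c hc
  obtain ⟨k, hk⟩ := hdvd
  have hp0 : (0 : ℤ) < p := by exact_mod_cast hp.pos
  have hNpos : 0 < x ^ 2 + 3 * y ^ 2 := by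
    rcases lt_or_eq_of_le (by positivity : (0:ℤ) ≤ x ^ 2 + 3 * y ^ 2) with h | h
    · exact h
    · exact absurd h.symm hne
  have hk0 : 0 < k := by nlinarith
  have hk4 : k < 4 := by nlinarith
  have hmod3 : p % 3 = 1 := by omega
  have hp3 : (p : ZMod 3) = 1 := by
    rw [← ZMod.natCast_mod, hmod3, Nat.cast_one]
  have h30 : (3 : ZMod 3) = 0 := by decide
  interval_cases k
  · exact ⟨x, y, by linarith⟩
  · -- k = 2 : impossible mod 3
    exfalso
    have h3 : ((x : ZMod 3)) ^ 2 = 2 := by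
      have := congrArg (Int.cast : ℤ → ZMod 3) hk
      push_cast at this
      rw [hp3] at this
      linear_combination this - ((y : ZMod 3)) ^ 2 * h30
    have : ∀ z : ZMod 3, z ^ 2 ≠ 2 := by decide
    exact this _ h3
  · -- k = 3 : descend
    have h3x : ((x : ZMod 3)) ^ 2 = 0 := by
      have := congrArg (Int.cast : ℤ → ZMod 3) hk
      push_cast at this
      rw [hp3] at this
      linear_combination this - (((y : ZMod 3)) ^ 2 - 1) * h30
    have hx0 : (x : ZMod 3) = 0 := pow_eq_zero_iff (n := 2) (by norm_num) |>.mp h3x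
    have h3dvd : (3 : ℤ) ∣ x := by
      rwa [ZMod.intCast_zmod_eq_zero_iff_dvd] at hx0
    obtain ⟨u, hu⟩ := h3dvd
    refine ⟨y, u, ?_⟩
    have : x ^ 2 + 3 * y ^ 2 = (p : ℤ) * 3 := hk
    rw [hu] at this
    nlinarith

/-- Uniqueness of the representation `p = a² + 12b²`. -/
lemma aux_unique (p : ℕ) (hp : p.Prime) {a b c d : ℤ}
    (ha : 0 < a) (hb : 0 < b) (hc : 0 < c) (hd : 0 < d)
    (hab : Int.gcd a b = 1) (hcd : Int.gcd c d = 1)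
    (h₁ : (p : ℤ) = a ^ 2 + 12 * b ^ 2) (h₂ : (p : ℤ) = c ^ 2 + 12 * d ^ 2) :
    a = c ∧ b = d := by
  have hpZ : Prime (p : ℤ) := Nat.prime_iff_prime_int.mp hp
  have hp0 : (0 : ℤ) < p := by exact_mod_cast hp.pos
  have key : (p : ℤ) ∣ (a * d - b * c) * (a * d + b * c) :=
    ⟨d ^ 2 - b ^ 2, by linear_combination b ^ 2 * h₂ - d ^ 2 * h₁⟩
  rcases hpZ.dvd_mul.mp key with hdvd | hdvd
  · -- p ∣ ad - bc, so ad = bc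
    have hP : (p : ℤ) ^ 2 = (a * c + 12 * b * d) ^ 2 + 12 * (a * d - b * c) ^ 2 := by
      linear_combination (c ^ 2 + 12 * d ^ 2) * h₁ + (p : ℤ) * h₂
    have hlt : |a * d - b * c| < (p : ℤ) := by
      have h12 : 12 * (a * d - b * c) ^ 2 ≤ (p : ℤ) ^ 2 := by
        nlinarith [sq_nonneg (a * c + 12 * b * d)]
      have : (a * d - b * c) ^ 2 < (p : ℤ) ^ 2 := by nlinarith
      have habs : |a * d - b * c| ^ 2 < (p:ℤ) ^ 2 := by rwa [sq_abs]
      nlinarith [abs_nonneg (a * d - b * c)]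
    have h0 : a * d - b * c = 0 := Int.eq_zero_of_abs_lt_dvd hdvd hlt
    have had : a * d = b * c := by linarith
    have hcoab : IsCoprime a b := Int.isCoprime_iff_gcd_eq_one.mpr hab
    have hcocd : IsCoprime c d := Int.isCoprime_iff_gcd_eq_one.mpr hcd
    have hac : a ∣ c := hcoab.dvd_of_dvd_mul_left ⟨d, by linarith⟩
    have hca : c ∣ a := hcocd.dvd_of_dvd_mul_right ⟨b, by linarith⟩
    have heq : a = c := Int.dvd_antisymm ha.le hc.le hac hca
    refine ⟨heq, ?_⟩
    have : a * d = a * b := by rw [had, heq]; ring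
    have := mul_left_cancel₀ (ne_of_gt ha) this
    omega
  · -- p ∣ ad + bc : impossible
    exfalso
    have hpos : 0 < a * d + b * c := by positivity
    have hle : (p : ℤ) ≤ a * d + b * c := Int.le_of_dvd hpos hdvd
    have hP : (p : ℤ) ^ 2 = (a * c - 12 * b * d) ^ 2 + 12 * (a * d + b * c) ^ 2 := by
      linear_combination (c ^ 2 + 12 * d ^ 2) * h₁ + (p : ℤ) * h₂
    nlinarith [sq_nonneg (a * c - 12 * b * d)]

/-- A prime `p ≡ 1 (mod 12)` has a unique representation `p = a² + 12 b²` with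
`a, b` relatively prime positive integers. -/
theorem stmt_2 (p : ℕ) (hp : p.Prime) (h1 : p % 12 = 1) :
    ∃! ab : ℤ × ℤ, 0 < ab.1 ∧ 0 < ab.2 ∧ Int.gcd ab.1 ab.2 = 1 ∧
      (p : ℤ) = ab.1 ^ 2 + 12 * ab.2 ^ 2 := by
  have hp2 := hp.two_le
  have hp13 : 13 ≤ p := by
    rcases Nat.lt_or_ge p 13 with h | h
    · interval_cases p <;> simp_all <;> omega
    · exact h
  obtain ⟨a, b, hab⟩ := aux_rep3 p hp h1
  -- b is even
  have hmod4 : p % 4 = 1 := by omega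
  have hp4 : (p : ZMod 4) = 1 := by
    rw [← ZMod.natCast_mod, hmod4, Nat.cast_one]
  have hb2 : ((b : ZMod 4)) ^ 2 = 0 := by
    have hcast := congrArg (Int.cast : ℤ → ZMod 4) hab
    push_cast at hcast
    rw [hp4] at hcast
    have hdec : ∀ u v : ZMod 4, (1 : ZMod 4) = u ^ 2 + 3 * v ^ 2 → v ^ 2 = 0 := by decide
    exact hdec _ _ hcast
  have h4b : (4 : ℤ) ∣ b ^ 2 := by
    have : ((b ^ 2 : ℤ) : ZMod 4) = 0 := by push_cast; exact hb2
    rwa [ZMod.intCast_zmod_eq_zero_iff_dvd] at this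
  have h2b : (2 : ℤ) ∣ b := by
    have h2b2 : (2 : ℤ) ∣ b * b := dvd_trans (by norm_num : (2:ℤ) ∣ 4) (by rwa [sq] at h4b)
    rcases Int.prime_two.dvd_mul.mp h2b2 with h | h <;> exact h
  obtain ⟨e, he⟩ := h2b
  have hrep : (p : ℤ) = a ^ 2 + 12 * e ^ 2 := by rw [hab, he]; ring
  -- positivity after taking absolute values
  set A := |a| with hA
  set E := |e| with hE
  have hrepA : (p : ℤ) = A ^ 2 + 12 * E ^ 2 := by rw [hA, hE, sq_abs, sq_abs]; exact hrep
  have hAne : a ≠ 0 := by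
    intro h
    rw [h] at hrep
    have h3 : (3 : ℤ) ∣ (p : ℤ) := ⟨4 * e ^ 2, by linarith⟩
    have : (3 : ℕ) ∣ p := by exact_mod_cast h3
    have := (Nat.prime_dvd_prime_iff_eq (by norm_num) hp).mp this
    omega
  have hEne : e ≠ 0 := by
    intro h
    rw [h] at hrep
    have hnat : p = a.natAbs ^ 2 := by
      have h' : (p : ℤ) = (a.natAbs : ℤ) ^ 2 := by
        push_cast
        rw [sq_abs]
        linarith
      exact_mod_cast h'
    have hdvd : a.natAbs ∣ p := by rw [hnat]; exact dvd_pow_self _ (by norm_num)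
    rcases (Nat.dvd_prime hp).mp hdvd with h' | h' <;> rw [h'] at hnat <;> nlinarith
  have hApos : 0 < A := abs_pos.mpr hAne
  have hEpos : 0 < E := abs_pos.mpr hEne
  -- coprimality
  have hgcd : Int.gcd A E = 1 := by
    set g := Int.gcd A E with hg
    have hgA : (g : ℤ) ∣ A := Int.gcd_dvd_left A E
    have hgE : (g : ℤ) ∣ E := Int.gcd_dvd_right A E
    have hg2 : ((g ^ 2 : ℕ) : ℤ) ∣ (p : ℤ) := by
      rw [hrepA]
      push_cast
      exact dvd_add (pow_dvd_pow_of_dvd hgA 2) (Dvd.dvd.mul_left (pow_dvd_pow_of_dvd hgE 2) 12)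
    have hg2' : g ^ 2 ∣ p := by exact_mod_cast hg2
    rcases (Nat.dvd_prime hp).mp hg2' with h' | h'
    · nlinarith [sq_nonneg g]
    · exfalso
      have hgp : g ∣ p := by rw [← h']; exact dvd_pow_self _ (by norm_num)
      rcases (Nat.dvd_prime hp).mp hgp with h'' | h'' <;> rw [h''] at h' <;> nlinarith
  refine ⟨(A, E), ⟨hApos, hEpos, hgcd, hrepA⟩, ?_⟩
  rintro ⟨c, d⟩ ⟨hc, hd, hcd, hcdrep⟩
  obtain ⟨h₁, h₂⟩ := aux_unique p hp hc hd hApos hEpos hcd hgcd hcdrep hrepA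
  exact Prod.ext h₁ h₂
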